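/- For every natural number n ≥ 1, ∑_{k=1}^∞ (1/(2k+1)^{n+1}) · C(2k,k)/4^k = ((−1)^n / n!) · ∫_0^{π/2} (ln sin x)^n dx − 1. -/

import Mathlib

open scoped BigOperators
open Real MeasureTheory Set

noncomputable def cb (k : ℕ) : ℝ := (Nat.choose (2*k) k : ℝ) / 4^k

noncomputable def H (k : ℕ) : ℝ := ∑ j ∈ Finset.range k, (1:ℝ)/(j+1)

noncomputable def oh (k : ℕ) : ℝ := ∑ j ∈ Finset.range k, (1:ℝ)/(2*j+1)

lemma cb_zero : cb 0 = 1 := by simp [cb]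

lemma cb_pos (k : ℕ) : 0 < cb k := by
  have : 0 < Nat.choose (2*k) k := Nat.choose_pos (by omega)
  have h4 : (0:ℝ) < 4^k := by positivity
  exact div_pos (by exact_mod_cast this) h4

lemma cb_rec (k : ℕ) : (2*(k:ℝ)+2) * cb (k+1) = (2*(k:ℝ)+1) * cb k := by
  have h := Nat.succ_mul_centralBinom_succ k
  have h' : ((k:ℝ)+1) * (Nat.choose (2*(k+1)) (k+1) : ℝ)
      = 2*(2*(k:ℝ)+1) * (Nat.choose (2*k) k : ℝ) := by
    have := congrArg (fun m : ℕ => (m : ℝ)) h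
    simp only [Nat.centralBinom] at this
    push_cast at this
    linarith
  have h4 : (4:ℝ)^k ≠ 0 := by positivity
  simp only [cb, pow_succ]
  rw [mul_div_assoc', mul_div_assoc', div_eq_div_iff (by positivity) h4]
  linear_combination 2*(4:ℝ)^k * h'

lemma cb_le_one (k : ℕ) : cb k ≤ 1 := by
  induction k with
  | zero => simp [cb]
  | succ k ih =>
    have hrec := cb_rec k
    have h1 : (0:ℝ) < 2*(k:ℝ)+2 := by positivity
    have : cb (k+1) ≤ cb k := by
      have hp := cb_pos k
      nlinarith
    linarith

lemma swap_sum (N : ℕ) (f : ℕ × ℕ → ℝ) :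
    ∑ p ∈ Finset.HasAntidiagonal.antidiagonal N, f p = ∑ p ∈ Finset.HasAntidiagonal.antidiagonal N, f p.swap := by
  conv_lhs => rw [← Finset.HasAntidiagonal.map_swap_antidiagonal (n := N)]
  rw [Finset.sum_map]
  simp

lemma TA (N : ℕ) : ∑ p ∈ Finset.HasAntidiagonal.antidiagonal N, (2*(p.1:ℝ)+1) * (cb p.1 * cb p.2)
    = ((N:ℝ)+1) * ∑ p ∈ Finset.HasAntidiagonal.antidiagonal N, cb p.1 * cb p.2 := by
  have h3 : ∑ p ∈ Finset.HasAntidiagonal.antidiagonal N, (2*(p.2:ℝ)+1) * (cb p.1 * cb p.2)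
      = ∑ p ∈ Finset.HasAntidiagonal.antidiagonal N, (2*(p.1:ℝ)+1) * (cb p.1 * cb p.2) := by
    rw [swap_sum N (fun p => (2*(p.2:ℝ)+1) * (cb p.1 * cb p.2))]
    exact Finset.sum_congr rfl fun p _ => by simp only [Prod.fst_swap, Prod.snd_swap]; ring
  have h2 : ∑ p ∈ Finset.HasAntidiagonal.antidiagonal N, ((2*(p.1:ℝ)+1) * (cb p.1 * cb p.2)
        + (2*(p.2:ℝ)+1) * (cb p.1 * cb p.2))
      = ∑ p ∈ Finset.HasAntidiagonal.antidiagonal N, (2*(N:ℝ)+2) * (cb p.1 * cb p.2) := by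
    refine Finset.sum_congr rfl fun p hp => ?_
    have hpN : p.1 + p.2 = N := Finset.HasAntidiagonal.mem_antidiagonal.mp hp
    have hc : (p.1:ℝ) + (p.2:ℝ) = N := by exact_mod_cast hpN
    linear_combination 2*cb p.1*cb p.2 * hc
  rw [Finset.sum_add_distrib, h3, ← Finset.mul_sum] at h2
  linarith

lemma UA (N : ℕ) : ∑ p ∈ Finset.HasAntidiagonal.antidiagonal N, 2*(p.1:ℝ) * (cb p.1 * cb p.2)
    = (N:ℝ) * ∑ p ∈ Finset.HasAntidiagonal.antidiagonal N, cb p.1 * cb p.2 := by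
  have h3 : ∑ p ∈ Finset.HasAntidiagonal.antidiagonal N, 2*(p.2:ℝ) * (cb p.1 * cb p.2)
      = ∑ p ∈ Finset.HasAntidiagonal.antidiagonal N, 2*(p.1:ℝ) * (cb p.1 * cb p.2) := by
    rw [swap_sum N (fun p => 2*(p.2:ℝ) * (cb p.1 * cb p.2))]
    exact Finset.sum_congr rfl fun p _ => by simp only [Prod.fst_swap, Prod.snd_swap]; ring
  have h2 : ∑ p ∈ Finset.HasAntidiagonal.antidiagonal N, (2*(p.1:ℝ) * (cb p.1 * cb p.2)
        + 2*(p.2:ℝ) * (cb p.1 * cb p.2))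
      = ∑ p ∈ Finset.HasAntidiagonal.antidiagonal N, (2*(N:ℝ)) * (cb p.1 * cb p.2) := by
    refine Finset.sum_congr rfl fun p hp => ?_
    have hpN : p.1 + p.2 = N := Finset.HasAntidiagonal.mem_antidiagonal.mp hp
    have hc : (p.1:ℝ) + (p.2:ℝ) = N := by exact_mod_cast hpN
    linear_combination 2*cb p.1*cb p.2 * hc
  rw [Finset.sum_add_distrib, h3, ← Finset.mul_sum] at h2
  linarith

lemma cb_conv (m : ℕ) :
    ∑ p ∈ Finset.HasAntidiagonal.antidiagonal m, cb p.1 * cb p.2 = 1 := by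
  induction m with
  | zero => simp [cb_zero]
  | succ m ih =>
    have e1 : ∑ p ∈ Finset.HasAntidiagonal.antidiagonal m, (2*(p.1:ℝ)+1) * (cb p.1 * cb p.2)
        = ∑ p ∈ Finset.HasAntidiagonal.antidiagonal m, 2*((p.1:ℝ)+1) * (cb (p.1+1) * cb p.2) := by
      refine Finset.sum_congr rfl fun p _ => ?_
      linear_combination (-(cb p.2)) * cb_rec p.1
    have e2 : ∑ q ∈ Finset.HasAntidiagonal.antidiagonal (m+1), 2*(q.1:ℝ) * (cb q.1 * cb q.2)
        = ∑ p ∈ Finset.HasAntidiagonal.antidiagonal m, 2*((p.1:ℝ)+1) * (cb (p.1+1) * cb p.2) := by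
      rw [Finset.Nat.antidiagonal_succ, Finset.sum_cons]
      rw [Finset.sum_map]
      simp only [Function.Embedding.coe_prodMap, Function.Embedding.coeFn_mk,
        Function.Embedding.refl_apply, Prod.map_fst, Prod.map_snd]
      push_cast
      simp
    have h1 := TA m
    have h2 := UA (m+1)
    rw [e1, ← e2, h2, ih] at h1
    have hm : ((m:ℝ)+1) ≠ 0 := by positivity
    have : ((m+1:ℕ):ℝ) = (m:ℝ)+1 := by push_cast; ring
    rw [this] at h1
    field_simp at h1
    linarith

lemma exp_neg_image : (fun u : ℝ => Real.exp (-u)) '' Set.Ioi 0 = Set.Ioo 0 1 := by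
  ext y
  constructor
  · rintro ⟨u, hu, rfl⟩
    refine ⟨Real.exp_pos _, ?_⟩
    rw [show (1:ℝ) = Real.exp 0 by simp]
    exact Real.exp_lt_exp.mpr (by simpa using (Set.mem_Ioi.mp hu))
  · rintro ⟨h0, h1⟩
    exact ⟨-Real.log y, by simpa using Real.log_neg h0 h1, by simp [Real.exp_log h0]⟩

lemma hasDeriv_exp_neg (u : ℝ) :
    HasDerivAt (fun u : ℝ => Real.exp (-u)) (-Real.exp (-u)) u := by
  convert (hasDerivAt_neg u).exp using 1; ring

lemma injOn_exp_neg : Set.InjOn (fun u : ℝ => Real.exp (-u)) (Set.Ioi 0) :=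
  fun _ _ _ _ h => neg_injective (Real.exp_injective h)

lemma int_pow_mul_exp (n : ℕ) (c : ℝ) (hc : 0 < c) :
    ∫ u in Set.Ioi (0:ℝ), u^n * Real.exp (-(c*u)) = (Nat.factorial n) / c^(n+1) := by
  have h := Real.integral_rpow_mul_exp_neg_mul_Ioi (a := (n:ℝ)+1) (by positivity) hc
  have e1 : ((n:ℝ)+1-1) = (n:ℝ) := by ring
  rw [e1] at h
  simp_rw [Real.rpow_natCast] at h
  rw [Real.Gamma_nat_eq_factorial] at h
  rw [h]
  have e2 : ((n:ℝ)+1) = ((n+1:ℕ):ℝ) := by push_cast; ring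
  rw [e2, Real.rpow_natCast, div_pow, one_pow]
  ring

lemma integrableOn_pow_mul_exp (n : ℕ) (c : ℝ) (hc : 1 ≤ c) :
    IntegrableOn (fun u : ℝ => u^n * Real.exp (-(c*u))) (Set.Ioi 0) := by
  have h1 : IntegrableOn (fun u : ℝ => Real.exp (-u) * u ^ ((n:ℝ)+1-1)) (Set.Ioi 0) :=
    Real.GammaIntegral_convergent (by positivity)
  have h2 : IntegrableOn (fun u : ℝ => u^n * Real.exp (-u)) (Set.Ioi 0) := by
    refine h1.congr_fun (fun u hu => ?_) measurableSet_Ioi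
    have e1 : ((n:ℝ)+1-1) = (n:ℝ) := by ring
    rw [e1]; simp only [Real.rpow_natCast]; ring
  refine h2.mono' ?_ ?_
  · exact (((continuous_pow n).mul ((Real.continuous_exp).comp
      (continuous_const.mul continuous_id).neg)).aestronglyMeasurable)
  · rw [ae_restrict_iff' measurableSet_Ioi]
    filter_upwards with u hu
    have hu0 : 0 < u := hu
    have : Real.exp (-(c*u)) ≤ Real.exp (-u) := by
      apply Real.exp_le_exp.mpr
      nlinarith
    rw [norm_mul, norm_pow, Real.norm_eq_abs, Real.norm_eq_abs,
      abs_of_pos hu0, abs_of_pos (Real.exp_pos _)]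
    have h3 : (0:ℝ) ≤ u^n := by positivity
    nlinarith [pow_pos hu0 n]

lemma key_pointwise (n m : ℕ) (u : ℝ) :
    |(-Real.exp (-u))| • ((Real.exp (-u))^m * (Real.log (Real.exp (-u)))^n)
      = ((-1:ℝ)^n) * ((fun u => u^n * Real.exp (-(((m:ℝ)+1)*u))) u) := by
  rw [abs_neg, abs_of_pos (Real.exp_pos _), Real.log_exp, smul_eq_mul]
  rw [← Real.exp_nat_mul, neg_pow]
  rw [show Real.exp (-u) * (Real.exp ((m:ℝ) * -u) * ((-1)^n * u^n))
      = (-1:ℝ)^n * (u^n * (Real.exp (-u) * Real.exp ((m:ℝ) * -u))) by ring,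
    ← Real.exp_add]
  ring_nf

lemma intOn_pow_mul_log (n m : ℕ) :
    IntegrableOn (fun t : ℝ => t^m * (Real.log t)^n) (Set.Ioo 0 1) := by
  rw [← exp_neg_image,
    integrableOn_image_iff_integrableOn_abs_deriv_smul measurableSet_Ioi
      (fun x _ => (hasDeriv_exp_neg x).hasDerivWithinAt) injOn_exp_neg]
  simp only [key_pointwise n m]
  exact (integrableOn_pow_mul_exp n ((m:ℝ)+1) (by exact_mod_cast Nat.le_add_left 1 m)).const_mul _

lemma int_pow_mul_log (n m : ℕ) :
    ∫ t in Set.Ioo (0:ℝ) 1, t^m * (Real.log t)^n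
      = (-1:ℝ)^n * (Nat.factorial n) / ((m:ℝ)+1)^(n+1) := by
  rw [← exp_neg_image,
    integral_image_eq_integral_abs_deriv_smul measurableSet_Ioi
      (fun x _ => (hasDeriv_exp_neg x).hasDerivWithinAt) injOn_exp_neg]
  simp only [key_pointwise n m]
  rw [integral_const_mul, int_pow_mul_exp n ((m:ℝ)+1) (by positivity)]
  ring

lemma int_pow_mul_abs_log (n m : ℕ) :
    ∫ t in Set.Ioo (0:ℝ) 1, t^m * |Real.log t|^n
      = (Nat.factorial n) / ((m:ℝ)+1)^(n+1) := by
  have h : ∫ t in Set.Ioo (0:ℝ) 1, t^m * |Real.log t|^n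
      = ∫ t in Set.Ioo (0:ℝ) 1, (-1:ℝ)^n * (t^m * (Real.log t)^n) := by
    refine setIntegral_congr_fun measurableSet_Ioo (fun t ht => ?_)
    have hlog : Real.log t ≤ 0 := Real.log_nonpos ht.1.le ht.2.le
    rw [abs_of_nonpos hlog, neg_pow]
    ring
  rw [h, integral_const_mul, int_pow_mul_log n m]
  rw [show ((-1:ℝ)^n * ((-1:ℝ)^n * (Nat.factorial n : ℝ) / ((m:ℝ)+1)^(n+1)))
      = ((-1:ℝ)*(-1:ℝ))^n * (Nat.factorial n : ℝ) / ((m:ℝ)+1)^(n+1) by rw [mul_pow]; ring]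
  norm_num

lemma cb_summable_norm {y : ℝ} (h0 : 0 ≤ y) (h1 : y < 1) :
    Summable (fun k => ‖cb k * y^k‖) := by
  refine Summable.of_nonneg_of_le (fun k => norm_nonneg _) (fun k => ?_)
    (summable_geometric_of_lt_one h0 h1)
  rw [norm_mul, norm_pow, Real.norm_eq_abs, Real.norm_eq_abs,
    abs_of_pos (cb_pos k), abs_of_nonneg h0]
  have := pow_nonneg h0 k
  nlinarith [cb_le_one k, cb_pos k]

lemma cb_tsum {y : ℝ} (h0 : 0 ≤ y) (h1 : y < 1) :
    ∑' k, cb k * y^k = 1 / Real.sqrt (1 - y) := by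
  have hnorm := cb_summable_norm h0 h1
  set g := ∑' k, cb k * y^k with hg
  have hsq : g * g = (1-y)⁻¹ := by
    rw [hg, tsum_mul_tsum_eq_tsum_sum_antidiagonal_of_summable_norm hnorm hnorm]
    have e : ∀ N : ℕ, ∑ p ∈ Finset.HasAntidiagonal.antidiagonal N, (cb p.1 * y^p.1) * (cb p.2 * y^p.2)
        = y^N := by
      intro N
      have e2 : ∑ p ∈ Finset.HasAntidiagonal.antidiagonal N, (cb p.1 * y^p.1) * (cb p.2 * y^p.2)
          = ∑ p ∈ Finset.HasAntidiagonal.antidiagonal N, (cb p.1 * cb p.2) * y^N := by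
        refine Finset.sum_congr rfl fun p hp => ?_
        have hpN : p.1 + p.2 = N := Finset.HasAntidiagonal.mem_antidiagonal.mp hp
        rw [← hpN, pow_add]; ring
      rw [e2, ← Finset.sum_mul, cb_conv, one_mul]
    simp_rw [e]
    exact tsum_geometric_of_lt_one h0 h1
  have hg1 : (1:ℝ) ≤ g := by
    have h := Summable.le_tsum hnorm.of_norm 0 (fun k _ => mul_nonneg (cb_pos k).le (pow_nonneg h0 k))
    simpa [cb_zero] using h
  have hg0 : (0:ℝ) ≤ g := by linarith
  rw [show g = Real.sqrt (g*g) from (Real.sqrt_mul_self hg0).symm, hsq,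
    Real.sqrt_inv, one_div]

lemma sin_image : Real.sin '' Set.Ioo 0 (π/2) = Set.Ioo 0 1 := by
  ext y
  constructor
  · rintro ⟨x, hx, rfl⟩
    refine ⟨Real.sin_pos_of_pos_of_lt_pi hx.1 (by linarith [hx.2, Real.pi_pos]), ?_⟩
    have := Real.strictMonoOn_sin (a := x) (b := π/2)
      (Set.mem_Icc.mpr ⟨by linarith [hx.1, Real.pi_pos], hx.2.le⟩)
      (Set.mem_Icc.mpr ⟨by linarith [Real.pi_pos], le_refl _⟩) hx.2
    simpa using this
  · rintro ⟨h0, h1⟩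
    exact ⟨Real.arcsin y, ⟨Real.arcsin_pos.2 h0, Real.arcsin_lt_pi_div_two.2 h1⟩,
      Real.sin_arcsin (by linarith) h1.le⟩

lemma injOn_sin_Ioo : Set.InjOn Real.sin (Set.Ioo 0 (π/2)) :=
  Real.injOn_sin.mono fun x hx => Set.mem_Icc.mpr ⟨by linarith [hx.1, Real.pi_pos], hx.2.le⟩

lemma summable_bound (n : ℕ) (hn : 1 ≤ n) (c : ℝ) (hc : 0 ≤ c) :
    Summable (fun k : ℕ => cb k * (c / (2*(k:ℝ)+1)^(n+1))) := by
  have hs : Summable (fun k : ℕ => |c| * (1/((k:ℝ)+1)^2)) := by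
    apply Summable.mul_left
    have h2 : Summable (fun k : ℕ => 1/((k:ℝ))^2) :=
      (Real.summable_one_div_nat_pow (p := 2)).2 (by norm_num)
    have := (summable_nat_add_iff (f := fun k : ℕ => 1/((k:ℝ))^2) 1).2 h2
    refine this.congr fun k => ?_
    push_cast
    ring
  refine Summable.of_nonneg_of_le (fun k => ?_) (fun k => ?_) hs
  · exact mul_nonneg (cb_pos k).le (div_nonneg hc (by positivity))
  · rw [abs_of_nonneg hc]
    have hk : (0:ℝ) ≤ (k:ℝ) := Nat.cast_nonneg k
    have h1 : ((k:ℝ)+1)^2 ≤ (2*(k:ℝ)+1)^(n+1) := by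
      calc ((k:ℝ)+1)^2 ≤ (2*(k:ℝ)+1)^2 := by gcongr <;> linarith
        _ ≤ (2*(k:ℝ)+1)^(n+1) := by
            apply pow_le_pow_right₀ (by linarith) (by omega)
    have h2 : c/(2*(k:ℝ)+1)^(n+1) ≤ c/((k:ℝ)+1)^2 := by gcongr <;> positivity
    calc cb k * (c/(2*(k:ℝ)+1)^(n+1))
        ≤ 1 * (c/((k:ℝ)+1)^2) :=
          mul_le_mul (cb_le_one k) h2 (div_nonneg hc (by positivity)) zero_le_one
      _ = c * (1/((k:ℝ)+1)^2) := by ring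

theorem main_int (n : ℕ) (hn : 1 ≤ n) :
    ∫ x in Set.Ioo (0:ℝ) (π/2), (Real.log (Real.sin x))^n
      = ∑' k : ℕ, cb k * ((-1:ℝ)^n * (Nat.factorial n) / (2*(k:ℝ)+1)^(n+1)) := by
  -- step A : rewrite integrand
  have stepA : ∫ x in Set.Ioo (0:ℝ) (π/2), (Real.log (Real.sin x))^n
      = ∫ x in Set.Ioo (0:ℝ) (π/2),
          |Real.cos x| • ((Real.log (Real.sin x))^n * (1 / Real.sqrt (1 - (Real.sin x)^2))) := by
    refine (setIntegral_congr_fun measurableSet_Ioo (fun x hx => ?_)).symm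
    have hcos : 0 < Real.cos x := Real.cos_pos_of_mem_Ioo
      ⟨by linarith [hx.1, Real.pi_pos], hx.2⟩
    rw [abs_of_pos hcos, smul_eq_mul, ← Real.cos_sq' x, Real.sqrt_sq hcos.le]
    field_simp
  have stepB : ∫ x in Set.Ioo (0:ℝ) (π/2),
          |Real.cos x| • ((Real.log (Real.sin x))^n * (1 / Real.sqrt (1 - (Real.sin x)^2)))
      = ∫ t in Set.Ioo (0:ℝ) 1, (Real.log t)^n * (1 / Real.sqrt (1 - t^2)) := by
    rw [← sin_image, integral_image_eq_integral_abs_deriv_smul measurableSet_Ioo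
      (fun x _ => (Real.hasDerivAt_sin x).hasDerivWithinAt) injOn_sin_Ioo]
  -- step C : expand into series
  have stepC : ∫ t in Set.Ioo (0:ℝ) 1, (Real.log t)^n * (1 / Real.sqrt (1 - t^2))
      = ∫ t in Set.Ioo (0:ℝ) 1, ∑' k : ℕ, cb k * (t^(2*k) * (Real.log t)^n) := by
    refine setIntegral_congr_fun measurableSet_Ioo (fun t ht => ?_)
    have ht2 : t^2 < 1 := by nlinarith [ht.1, ht.2]
    have h := cb_tsum (sq_nonneg t) ht2
    have e : ∀ k : ℕ, cb k * (t^(2*k) * (Real.log t)^n)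
        = (cb k * (t^2)^k) * (Real.log t)^n := by
      intro k; rw [pow_mul]; ring
    rw [show (∑' k : ℕ, cb k * (t^(2*k) * (Real.log t)^n))
        = ∑' k : ℕ, (cb k * (t^2)^k) * (Real.log t)^n from tsum_congr e]
    rw [tsum_mul_right, h]
    ring
  -- step D : swap integral and sum
  have hInt : ∀ k : ℕ, IntegrableOn (fun t : ℝ => cb k * (t^(2*k) * (Real.log t)^n))
      (Set.Ioo (0:ℝ) 1) := fun k => (intOn_pow_mul_log n (2*k)).const_mul _
  have hnormint : ∀ k : ℕ, ∫ t in Set.Ioo (0:ℝ) 1, ‖cb k * (t^(2*k) * (Real.log t)^n)‖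
      = cb k * ((Nat.factorial n : ℝ) / (2*(k:ℝ)+1)^(n+1)) := by
    intro k
    have : ∀ t ∈ Set.Ioo (0:ℝ) 1, ‖cb k * (t^(2*k) * (Real.log t)^n)‖
        = cb k * (t^(2*k) * |Real.log t|^n) := by
      intro t ht
      rw [norm_mul, norm_mul, norm_pow, norm_pow, Real.norm_eq_abs, Real.norm_eq_abs,
        Real.norm_eq_abs, abs_of_pos (cb_pos k), abs_of_pos ht.1]
    rw [setIntegral_congr_fun measurableSet_Ioo this, integral_const_mul,
      int_pow_mul_abs_log n (2*k)]
    push_cast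
    ring_nf
  have hsummable : Summable (fun k : ℕ =>
      cb k * ((Nat.factorial n : ℝ) / (2*(k:ℝ)+1)^(n+1))) := summable_bound n hn _ (by positivity)
  have stepD : ∫ t in Set.Ioo (0:ℝ) 1, ∑' k : ℕ, cb k * (t^(2*k) * (Real.log t)^n)
      = ∑' k : ℕ, ∫ t in Set.Ioo (0:ℝ) 1, cb k * (t^(2*k) * (Real.log t)^n) := by
    refine integral_tsum (fun k => (hInt k).aestronglyMeasurable) ?_
    have e : ∀ k : ℕ, ∫⁻ t in Set.Ioo (0:ℝ) 1, ‖cb k * (t^(2*k) * (Real.log t)^n)‖ₑ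
        = ENNReal.ofReal (cb k * ((Nat.factorial n : ℝ) / (2*(k:ℝ)+1)^(n+1))) := by
      intro k
      rw [← ofReal_integral_norm_eq_lintegral_enorm (hInt k), hnormint k]
    rw [tsum_congr e, ← ENNReal.ofReal_tsum_of_nonneg
      (fun k => mul_nonneg (cb_pos k).le (by positivity)) hsummable]
    exact ENNReal.ofReal_ne_top
  -- step E : evaluate each integral
  have stepE : ∀ k : ℕ, ∫ t in Set.Ioo (0:ℝ) 1, cb k * (t^(2*k) * (Real.log t)^n)
      = cb k * ((-1:ℝ)^n * (Nat.factorial n) / (2*(k:ℝ)+1)^(n+1)) := by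
    intro k
    rw [integral_const_mul, int_pow_mul_log n (2*k)]
    push_cast
    ring_nf
  rw [stepA, stepB, stepC, stepD, tsum_congr stepE]

theorem stmt_10 (n : ℕ) (hn : 1 ≤ n) :
    ∑' k : ℕ, (1/(2*((k:ℝ)+1)+1)^(n+1)) * cb (k+1)
      = ((-1:ℝ)^n / (Nat.factorial n))
          * (∫ x in (0:ℝ)..(Real.pi/2), (Real.log (Real.sin x))^n) - 1 := by
  have hpi : (0:ℝ) ≤ π/2 := by linarith [Real.pi_pos]
  have hIoo : (∫ x in (0:ℝ)..(π/2), (Real.log (Real.sin x))^n)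
      = ∫ x in Set.Ioo (0:ℝ) (π/2), (Real.log (Real.sin x))^n := by
    rw [intervalIntegral.integral_of_le hpi, integral_Ioc_eq_integral_Ioo]
  set F : ℕ → ℝ := fun k => (1/(2*(k:ℝ)+1)^(n+1)) * cb k with hF
  have hFsum : Summable F := by
    have h := summable_bound n hn 1 zero_le_one
    refine h.congr fun k => ?_
    simp only [hF]
    ring
  have hfac : (Nat.factorial n : ℝ) ≠ 0 := Nat.cast_ne_zero.2 n.factorial_ne_zero
  have e1 : ((-1:ℝ)^n * (-1:ℝ)^n) = 1 := by rw [← mul_pow]; norm_num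
  have hrhs : ((-1:ℝ)^n / (Nat.factorial n))
      * (∫ x in Set.Ioo (0:ℝ) (π/2), (Real.log (Real.sin x))^n) = ∑' k, F k := by
    rw [main_int n hn, ← tsum_mul_left]
    refine tsum_congr fun k => ?_
    have hden : ((2*(k:ℝ)+1)^(n+1)) ≠ 0 := by positivity
    calc ((-1:ℝ)^n / (Nat.factorial n))
          * (cb k * ((-1:ℝ)^n * (Nat.factorial n) / (2*(k:ℝ)+1)^(n+1)))
        = ((-1:ℝ)^n * (-1:ℝ)^n) * ((Nat.factorial n : ℝ)/(Nat.factorial n))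
            * (cb k / (2*(k:ℝ)+1)^(n+1)) := by ring
      _ = F k := by rw [e1, div_self hfac, one_mul, one_mul]; simp only [hF]; ring
  rw [hIoo, hrhs, Summable.tsum_eq_zero_add hFsum]
  have hF0 : F 0 = 1 := by simp [hF, cb_zero]
  rw [hF0, show (1:ℝ) + ∑' k, F (k+1) - 1 = ∑' k, F (k+1) by ring]
  refine tsum_congr fun k => ?_
  simp only [hF]
  push_cast
  ring_nf
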